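/- Let m >= 0 and n >= 1 be integers with n even. Then X^(m)(n) = M2^(m)(n) - M1^(m)(n), where M1^(m)(n) is the number of lattice points with odd y-coordinate in Omega = { (x,y) in R^2 : x*y < (n+1)/2, y - 6x < 2m, y - 4x > 2m, x > 0, y > 0 } and M2^(m)(n) is the number of lattice points with odd y-coordinate in Omega' = { (x,y) in R^2 : x*y < (n+1)/2, 2x - 3y < 2m, 4x - y > 2m, x > 0, y > 0 }. -/

import Mathlib

/-- The geometric series `1/(1-q^k) = ∑_{j ≥ 0} q^{k·j}` as a formal power series over `ℤ`:
its coefficient at `q^n` is `1` exactly when `k ∣ n`. -/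
def geomSer (k : ℕ) : PowerSeries ℤ := PowerSeries.mk fun n => if k ∣ n then 1 else 0

/-- The formal power series `∑_{k ≥ 1} (-1)^k q^{k(3k+1)+2mk}/(1-q^{2k})`.
For a fixed `n`, only the (finitely many) summands with `1 ≤ k ≤ n` can contribute to the
coefficient of `q^n` (for `k > n` the lowest exponent `k(3k+1)+2mk` exceeds `n`), so the
coefficient of `q^n` of the infinite sum is the corresponding finite sum of coefficients. -/
noncomputable def seriesA (m : ℕ) : PowerSeries ℤ :=
  PowerSeries.mk fun n => ∑ k ∈ Finset.Icc 1 n,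
    (PowerSeries.coeff (R := ℤ) n)
      (PowerSeries.C (R := ℤ) ((-1) ^ k) * PowerSeries.X ^ (k * (3 * k + 1) + 2 * m * k) *
        geomSer (2 * k))

/-- The formal power series `∑_{k ≥ 1} (-1)^k q^{k(k+1)/2+mk}/(1-q^k)` (same convention). -/
noncomputable def seriesB (m : ℕ) : PowerSeries ℤ :=
  PowerSeries.mk fun n => ∑ k ∈ Finset.Icc 1 n,
    (PowerSeries.coeff (R := ℤ) n)
      (PowerSeries.C (R := ℤ) ((-1) ^ k) * PowerSeries.X ^ (k * (k + 1) / 2 + m * k) * geomSer k)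

lemma coeff_term (c : ℤ) (e k N : ℕ) :
    PowerSeries.coeff (R := ℤ) N (PowerSeries.C (R := ℤ) c * PowerSeries.X ^ e * geomSer k) =
    if e ≤ N ∧ k ∣ N - e then c else 0 := by
  rw [mul_assoc, PowerSeries.coeff_C_mul, PowerSeries.coeff_X_pow_mul', geomSer]
  by_cases h : e ≤ N
  · by_cases h2 : k ∣ N - e <;> simp [h, h2]
  · simp [h]

lemma coeffA (m N : ℕ) : PowerSeries.coeff (R := ℤ) N (seriesA m) =
    ∑ k ∈ Finset.Icc 1 N,
      if k * (3 * k + 1) + 2 * m * k ≤ N ∧ 2 * k ∣ N - (k * (3 * k + 1) + 2 * m * k)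
      then (-1 : ℤ) ^ k else 0 := by
  rw [seriesA, PowerSeries.coeff_mk]
  exact Finset.sum_congr rfl fun k _ => coeff_term _ _ _ _

lemma coeffB (m N : ℕ) : PowerSeries.coeff (R := ℤ) N (seriesB m) =
    ∑ k ∈ Finset.Icc 1 N,
      if k * (k + 1) / 2 + m * k ≤ N ∧ k ∣ N - (k * (k + 1) / 2 + m * k)
      then (-1 : ℤ) ^ k else 0 := by
  rw [seriesB, PowerSeries.coeff_mk]
  exact Finset.sum_congr rfl fun k _ => coeff_term _ _ _ _

lemma recXc (m : ℕ) (Xc : ℕ → ℤ)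
    (hX : (1 - PowerSeries.X ^ 2) * PowerSeries.mk Xc = seriesA m - seriesB m) (N : ℕ) :
    Xc N = PowerSeries.coeff (R := ℤ) N (seriesA m) - PowerSeries.coeff (R := ℤ) N (seriesB m)
      + (if 2 ≤ N then Xc (N - 2) else 0) := by
  have h := congrArg (PowerSeries.coeff (R := ℤ) N) hX
  rw [sub_mul, one_mul, map_sub, map_sub, PowerSeries.coeff_X_pow_mul'] at h
  simp only [PowerSeries.coeff_mk] at h
  split_ifs at h <;> split_ifs <;> linarith

lemma teleXc (m : ℕ) (Xc : ℕ → ℤ)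
    (hX : (1 - PowerSeries.X ^ 2) * PowerSeries.mk Xc = seriesA m - seriesB m) (t : ℕ) :
    Xc (2 * t) = ∑ i ∈ Finset.range (t + 1),
      (PowerSeries.coeff (R := ℤ) (2 * i) (seriesA m) - PowerSeries.coeff (R := ℤ) (2 * i) (seriesB m)) := by
  induction t with
  | zero => simpa using recXc m Xc hX 0
  | succ t ih =>
    rw [Finset.sum_range_succ, ← ih]
    have h := recXc m Xc hX (2 * (t + 1))
    rw [if_pos (by omega)] at h
    have h2 : 2 * (t + 1) - 2 = 2 * t := by omega
    rw [h2] at h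
    linarith

def eA (m k : ℕ) : ℕ := k * (3 * k + 1) + 2 * m * k
def eB (m k : ℕ) : ℕ := k * (k + 1) / 2 + m * k

def FA (m n : ℕ) : Finset (ℕ × ℕ) :=
  (Finset.Icc 1 n ×ˢ Finset.Icc 1 n).filter
    fun p => 3 * p.1 + 2 * m + 1 ≤ p.2 ∧ ¬ 2 ∣ (p.1 + p.2) ∧ p.1 * p.2 ≤ n

def FB (m n : ℕ) : Finset (ℕ × ℕ) :=
  (Finset.Icc 1 (2 * n) ×ˢ Finset.Icc 1 (2 * n)).filter
    fun p => p.1 + 2 * m + 1 ≤ p.2 ∧ ¬ 2 ∣ (p.1 + p.2) ∧ p.1 * p.2 ≤ 2 * n ∧ 4 ∣ p.1 * p.2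

lemma sumA (m t : ℕ) :
    ∑ i ∈ Finset.range (t + 1), (∑ k ∈ Finset.Icc 1 (2 * i),
        if eA m k ≤ 2 * i ∧ 2 * k ∣ 2 * i - eA m k then (-1 : ℤ) ^ k else 0)
      = ∑ p ∈ FA m (2 * t), (-1 : ℤ) ^ p.1 := by
  have hstep : ∀ i ∈ Finset.range (t + 1),
      (∑ k ∈ Finset.Icc 1 (2 * i),
        if eA m k ≤ 2 * i ∧ 2 * k ∣ 2 * i - eA m k then (-1 : ℤ) ^ k else 0)
        = ∑ k ∈ Finset.Icc 1 (2 * t),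
        if eA m k ≤ 2 * i ∧ 2 * k ∣ 2 * i - eA m k then (-1 : ℤ) ^ k else 0 := by
    intro i hi
    apply Finset.sum_subset
    · apply Finset.Icc_subset_Icc_right; simp only [Finset.mem_range] at hi; omega
    · intro k hk hk2
      rw [if_neg]
      simp only [Finset.mem_Icc] at hk hk2
      intro hcon
      have h1 : k ≤ k * (3 * k + 1) := Nat.le_mul_of_pos_right k (by omega)
      unfold eA at hcon
      omega
  rw [Finset.sum_congr rfl hstep, ← Finset.sum_product', ← Finset.sum_filter]
  apply Finset.sum_nbij' (i := fun p => (p.2, 2 * p.1 / p.2))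
    (j := fun q => (q.1 * q.2 / 2, q.1))
  · rintro ⟨i, k⟩ hp
    simp only [Finset.mem_filter, Finset.mem_product, Finset.mem_range, Finset.mem_Icc] at hp
    obtain ⟨⟨hi, hk⟩, h1, h2⟩ := hp
    obtain ⟨j, hj⟩ := h2
    unfold eA at h1 hj
    have e2 : 2 * k * j = 2 * (k * j) := by ring
    have e1 : k * (3 * k + 1 + 2 * m + 2 * j) = k * (3 * k + 1) + 2 * m * k + 2 * (k * j) := by
      ring
    have hmul : 2 * i = k * (3 * k + 1 + 2 * m + 2 * j) := by omega
    have hw : 2 * i / k = 3 * k + 1 + 2 * m + 2 * j := by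
      rw [hmul, Nat.mul_div_cancel_left _ (by omega : 0 < k)]
    simp only [FA, Finset.mem_filter, Finset.mem_product, Finset.mem_Icc, hw]
    have h3 : k ≤ k * (3 * k + 1 + 2 * m + 2 * j) := Nat.le_mul_of_pos_right k (by omega)
    have h4 : 3 * k + 1 + 2 * m + 2 * j ≤ k * (3 * k + 1 + 2 * m + 2 * j) :=
      Nat.le_mul_of_pos_left _ (by omega)
    refine ⟨⟨⟨by omega, by omega⟩, by omega, by omega⟩, by omega, by omega, by omega⟩
  · rintro ⟨k, w⟩ hq
    simp only [FA, Finset.mem_filter, Finset.mem_product, Finset.mem_Icc] at hq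
    obtain ⟨⟨⟨hk1, hk2⟩, hw1, hw2⟩, h1, h2, h3⟩ := hq
    have h2dvd : 2 ∣ k * w := by
      rcases Nat.even_or_odd k with he | ho
      · exact Dvd.dvd.mul_right he.two_dvd w
      · have hwev : 2 ∣ w := by obtain ⟨a, ha⟩ := ho; omega
        exact Dvd.dvd.mul_left hwev k
    obtain ⟨i', hi'⟩ := h2dvd
    obtain ⟨j, hjw⟩ : ∃ j, w = 3 * k + 1 + 2 * m + 2 * j := ⟨(w - (3 * k + 1 + 2 * m)) / 2,
      by omega⟩
    have e0 : k * w = k * (3 * k + 1 + 2 * m + 2 * j) := by rw [hjw]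
    have e1 : k * (3 * k + 1 + 2 * m + 2 * j) = k * (3 * k + 1) + 2 * m * k + 2 * (k * j) := by
      ring
    have e2 : 2 * k * j = 2 * (k * j) := by ring
    simp only [Finset.mem_filter, Finset.mem_product, Finset.mem_range, Finset.mem_Icc]
    unfold eA
    refine ⟨⟨by omega, by omega, by omega⟩, by omega, ⟨j, by omega⟩⟩
  · rintro ⟨i, k⟩ hp
    simp only [Finset.mem_filter, Finset.mem_product, Finset.mem_range, Finset.mem_Icc] at hp
    obtain ⟨⟨hi, hk⟩, h1, h2⟩ := hp
    obtain ⟨j, hj⟩ := h2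
    unfold eA at h1 hj
    have e2 : 2 * k * j = 2 * (k * j) := by ring
    have e1 : k * (3 * k + 1 + 2 * m + 2 * j) = k * (3 * k + 1) + 2 * m * k + 2 * (k * j) := by
      ring
    have hmul : 2 * i = k * (3 * k + 1 + 2 * m + 2 * j) := by omega
    have hw : 2 * i / k = 3 * k + 1 + 2 * m + 2 * j := by
      rw [hmul, Nat.mul_div_cancel_left _ (by omega : 0 < k)]
    simp only [hw, Prod.mk.injEq]
    exact ⟨by rw [← hmul]; omega, trivial⟩
  · rintro ⟨k, w⟩ hq
    simp only [FA, Finset.mem_filter, Finset.mem_product, Finset.mem_Icc] at hq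
    obtain ⟨⟨⟨hk1, hk2⟩, hw1, hw2⟩, h1, h2, h3⟩ := hq
    have h2dvd : 2 ∣ k * w := by
      rcases Nat.even_or_odd k with he | ho
      · exact Dvd.dvd.mul_right he.two_dvd w
      · have hwev : 2 ∣ w := by obtain ⟨a, ha⟩ := ho; omega
        exact Dvd.dvd.mul_left hwev k
    obtain ⟨i', hi'⟩ := h2dvd
    have hhalf : 2 * (k * w / 2) = k * w := by omega
    simp only [Prod.mk.injEq]
    exact ⟨trivial, by rw [hhalf, Nat.mul_div_cancel_left _ (by omega : 0 < k)]⟩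
  · rintro ⟨i, k⟩ _; rfl



lemma twoEB (m k : ℕ) : 2 * eB m k = k * (k + 1) + 2 * (m * k) := by
  obtain ⟨c, hc⟩ := Nat.even_mul_succ_self k
  unfold eB
  omega

lemma sumB (m t : ℕ) :
    ∑ i ∈ Finset.range (t + 1), (∑ k ∈ Finset.Icc 1 (2 * i),
        if eB m k ≤ 2 * i ∧ k ∣ 2 * i - eB m k then (-1 : ℤ) ^ k else 0)
      = ∑ p ∈ FB m (2 * t), (-1 : ℤ) ^ p.1 := by
  have hstep : ∀ i ∈ Finset.range (t + 1),
      (∑ k ∈ Finset.Icc 1 (2 * i),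
        if eB m k ≤ 2 * i ∧ k ∣ 2 * i - eB m k then (-1 : ℤ) ^ k else 0)
        = ∑ k ∈ Finset.Icc 1 (4 * t),
        if eB m k ≤ 2 * i ∧ k ∣ 2 * i - eB m k then (-1 : ℤ) ^ k else 0 := by
    intro i hi
    apply Finset.sum_subset
    · apply Finset.Icc_subset_Icc_right; simp only [Finset.mem_range] at hi; omega
    · intro k hk hk2
      rw [if_neg]
      simp only [Finset.mem_Icc] at hk hk2
      intro hcon
      have h1 : k ≤ k * k := Nat.le_mul_of_pos_left k (by omega)
      have h2 : k * (k + 1) = k * k + k := by ring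
      have h3 := twoEB m k
      omega
  rw [Finset.sum_congr rfl hstep, ← Finset.sum_product', ← Finset.sum_filter]
  have h2n : 2 * (2 * t) = 4 * t := by ring
  apply Finset.sum_nbij' (i := fun p => (p.2, 4 * p.1 / p.2))
    (j := fun q => (q.1 * q.2 / 4, q.1))
  · rintro ⟨i, k⟩ hp
    simp only [Finset.mem_filter, Finset.mem_product, Finset.mem_range, Finset.mem_Icc] at hp
    obtain ⟨⟨hi, hk⟩, h1, h2⟩ := hp
    obtain ⟨j, hj⟩ := h2
    have hEB := twoEB m k
    have e1 : k * (k + 1 + 2 * m + 2 * j) = k * (k + 1) + 2 * (m * k) + 2 * (k * j) := by ring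
    have hmul : 4 * i = k * (k + 1 + 2 * m + 2 * j) := by omega
    have hv : 4 * i / k = k + 1 + 2 * m + 2 * j := by
      rw [hmul, Nat.mul_div_cancel_left _ (by omega : 0 < k)]
    simp only [FB, Finset.mem_filter, Finset.mem_product, Finset.mem_Icc, hv, h2n]
    have h3 : k ≤ k * (k + 1 + 2 * m + 2 * j) := Nat.le_mul_of_pos_right k (by omega)
    have h4 : k + 1 + 2 * m + 2 * j ≤ k * (k + 1 + 2 * m + 2 * j) :=
      Nat.le_mul_of_pos_left _ (by omega)
    exact ⟨⟨⟨by omega, by omega⟩, by omega, by omega⟩, by omega, by omega, by omega,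
      ⟨i, by omega⟩⟩
  · rintro ⟨k, v⟩ hq
    simp only [FB, Finset.mem_filter, Finset.mem_product, Finset.mem_Icc, h2n] at hq
    obtain ⟨⟨⟨hk1, hk2⟩, hv1, hv2⟩, h1, h2, h3, h4⟩ := hq
    obtain ⟨i', hi'⟩ := h4
    obtain ⟨j, hjv⟩ : ∃ j, v = k + 1 + 2 * m + 2 * j := ⟨(v - (k + 1 + 2 * m)) / 2, by omega⟩
    have e0 : k * v = k * (k + 1 + 2 * m + 2 * j) := by rw [hjv]
    have e1 : k * (k + 1 + 2 * m + 2 * j) = k * (k + 1) + 2 * (m * k) + 2 * (k * j) := by ring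
    have hEB := twoEB m k
    simp only [Finset.mem_filter, Finset.mem_product, Finset.mem_range, Finset.mem_Icc]
    refine ⟨⟨by omega, by omega, by omega⟩, by omega, ⟨j, by omega⟩⟩
  · rintro ⟨i, k⟩ hp
    simp only [Finset.mem_filter, Finset.mem_product, Finset.mem_range, Finset.mem_Icc] at hp
    obtain ⟨⟨hi, hk⟩, h1, h2⟩ := hp
    obtain ⟨j, hj⟩ := h2
    have hEB := twoEB m k
    have e1 : k * (k + 1 + 2 * m + 2 * j) = k * (k + 1) + 2 * (m * k) + 2 * (k * j) := by ring
    have hmul : 4 * i = k * (k + 1 + 2 * m + 2 * j) := by omega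
    have hv : 4 * i / k = k + 1 + 2 * m + 2 * j := by
      rw [hmul, Nat.mul_div_cancel_left _ (by omega : 0 < k)]
    simp only [hv, Prod.mk.injEq]
    exact ⟨by rw [← hmul]; omega, trivial⟩
  · rintro ⟨k, v⟩ hq
    simp only [FB, Finset.mem_filter, Finset.mem_product, Finset.mem_Icc, h2n] at hq
    obtain ⟨⟨⟨hk1, hk2⟩, hv1, hv2⟩, h1, h2, h3, h4⟩ := hq
    obtain ⟨i', hi'⟩ := h4
    have hquart : 4 * (k * v / 4) = k * v := by omega
    simp only [Prod.mk.injEq]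
    exact ⟨trivial, by rw [hquart, Nat.mul_div_cancel_left _ (by omega : 0 < k)]⟩
  · rintro ⟨i, k⟩ _; rfl

def phi : ℕ × ℕ → ℕ × ℕ := fun p => if 2 ∣ p.1 then (2 * p.1, p.2) else (p.1, 2 * p.2)

def FM1 (m n : ℕ) : Finset (ℕ × ℕ) :=
  (Finset.Icc 1 n ×ˢ Finset.Icc 1 n).filter
    fun p => ¬ 2 ∣ p.2 ∧ 4 * p.1 + 2 * m < p.2 ∧ p.2 < 6 * p.1 + 2 * m ∧ 2 * (p.1 * p.2) ≤ n

def FM2 (m n : ℕ) : Finset (ℕ × ℕ) :=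
  (Finset.Icc 1 n ×ˢ Finset.Icc 1 n).filter
    fun p => ¬ 2 ∣ p.2 ∧ 2 * p.1 < 3 * p.2 + 2 * m ∧ p.2 + 2 * m < 4 * p.1 ∧ 2 * (p.1 * p.2) ≤ n

lemma four_dvd_left {a b : ℕ} (h4 : 4 ∣ a * b) (ha : 2 ∣ a) (hb : ¬ 2 ∣ b) : 4 ∣ a := by
  obtain ⟨c, hc⟩ := ha
  rcases Nat.even_or_odd c with he | ho
  · obtain ⟨d, hd⟩ := he; omega
  · exfalso
    obtain ⟨x, hx⟩ := ho
    obtain ⟨y, hy⟩ : ∃ y, b = 2 * y + 1 := ⟨b / 2, by omega⟩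
    have he : a * b = 8 * (x * y) + 4 * x + 4 * y + 2 := by rw [hc, hx, hy]; ring
    omega

lemma phi_mem (m n : ℕ) : ∀ p ∈ FA m n, phi p ∈ FB m n := by
  rintro ⟨u, w⟩ hp
  simp only [FA, Finset.mem_filter, Finset.mem_product, Finset.mem_Icc] at hp
  obtain ⟨⟨⟨hu1, hu2⟩, hw1, hw2⟩, h1, h2, h3⟩ := hp
  unfold phi
  split_ifs with hpar
  · simp only [FB, Finset.mem_filter, Finset.mem_product, Finset.mem_Icc]
    obtain ⟨c, hc⟩ := hpar
    have hc' : u = 2 * c := hc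
    have e1 : 2 * u * w = 2 * (u * w) := by ring
    have e2 : 2 * u * w = 4 * (c * w) := by rw [hc']; ring
    exact ⟨⟨⟨by omega, by omega⟩, by omega, by omega⟩, by omega, by omega, by omega,
      ⟨c * w, by omega⟩⟩
  · simp only [FB, Finset.mem_filter, Finset.mem_product, Finset.mem_Icc]
    have hwev : 2 ∣ w := by omega
    obtain ⟨c, hc⟩ := hwev
    have e1 : u * (2 * w) = 2 * (u * w) := by ring
    have e2 : u * (2 * w) = 4 * (u * c) := by rw [hc]; ring
    exact ⟨⟨⟨by omega, by omega⟩, by omega, by omega⟩, by omega, by omega, by omega,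
      ⟨u * c, by omega⟩⟩

lemma phi_inj (m n : ℕ) : ∀ p ∈ FA m n, ∀ q ∈ FA m n, phi p = phi q → p = q := by
  rintro ⟨u, w⟩ _ ⟨u', w'⟩ _ h
  unfold phi at h
  split_ifs at h with h1 h2 h2 <;>
    simp only [Prod.mk.injEq] at h ⊢ <;> omega

lemma phi_sign (p : ℕ × ℕ) : ((-1 : ℤ)) ^ (phi p).1 = (-1 : ℤ) ^ p.1 := by
  unfold phi
  split_ifs with h
  · obtain ⟨c, hc⟩ := h
    have h1 : Even (2 * p.1) := ⟨p.1, by omega⟩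
    have h2 : Even p.1 := ⟨c, by omega⟩
    rw [Even.neg_one_pow h1, Even.neg_one_pow h2]
  · rfl

lemma image_char (m n : ℕ) (q : ℕ × ℕ) (hq : q ∈ FB m n) :
    q ∈ (FA m n).image phi ↔
      (2 ∣ q.1 ∧ 3 * q.1 + 4 * m + 2 ≤ 2 * q.2) ∨ (¬ 2 ∣ q.1 ∧ 6 * q.1 + 4 * m + 2 ≤ q.2) := by
  obtain ⟨U, V⟩ := q
  simp only [FB, Finset.mem_filter, Finset.mem_product, Finset.mem_Icc] at hq
  obtain ⟨⟨⟨hU1, hU2⟩, hV1, hV2⟩, h1, h2, h3, h4⟩ := hq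
  constructor
  · rintro h
    simp only [Finset.mem_image] at h
    obtain ⟨⟨u, w⟩, hmem, hphi⟩ := h
    simp only [FA, Finset.mem_filter, Finset.mem_product, Finset.mem_Icc] at hmem
    obtain ⟨⟨⟨hu1, hu2⟩, hw1, hw2⟩, g1, g2, g3⟩ := hmem
    unfold phi at hphi
    split_ifs at hphi with hpar <;> simp only [Prod.mk.injEq] at hphi <;> [left; right] <;>
      constructor <;> omega
  · rintro (⟨hev, hge⟩ | ⟨hod, hge⟩)
    · have hVodd : ¬ 2 ∣ V := by omega
      obtain ⟨d, hd⟩ := four_dvd_left h4 hev hVodd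
      simp only [Finset.mem_image]
      refine ⟨(2 * d, V), ?_, ?_⟩
      · simp only [FA, Finset.mem_filter, Finset.mem_product, Finset.mem_Icc]
        have e1 : U * V = 2 * (2 * d * V) := by rw [hd]; ring
        have hle : 2 * d ≤ 2 * d * V := Nat.le_mul_of_pos_right _ (by omega)
        have hle2 : V ≤ 2 * d * V := Nat.le_mul_of_pos_left _ (by omega)
        exact ⟨⟨⟨by omega, by omega⟩, by omega, by omega⟩, by omega, by omega, by omega⟩
      · unfold phi
        rw [if_pos ⟨d, rfl⟩]
        simp only [Prod.mk.injEq]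
        exact ⟨by omega, trivial⟩
    · have hVev : 2 ∣ V := by omega
      have h4' : 4 ∣ V * U := by rw [mul_comm] at h4; exact h4
      obtain ⟨d, hd⟩ := four_dvd_left h4' hVev hod
      simp only [Finset.mem_image]
      refine ⟨(U, 2 * d), ?_, ?_⟩
      · simp only [FA, Finset.mem_filter, Finset.mem_product, Finset.mem_Icc]
        have e1 : U * V = 2 * (U * (2 * d)) := by rw [hd]; ring
        have hle : U ≤ U * (2 * d) := Nat.le_mul_of_pos_right _ (by omega)
        have hle2 : 2 * d ≤ U * (2 * d) := Nat.le_mul_of_pos_left _ (by omega)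
        exact ⟨⟨⟨by omega, by omega⟩, by omega, by omega⟩, by omega, by omega, by omega⟩
      · unfold phi
        rw [if_neg hod]
        simp only [Prod.mk.injEq]
        exact ⟨trivial, by omega⟩

lemma card_D1 (m n : ℕ) :
    ((FB m n).filter fun q => 2 ∣ q.1 ∧ 2 * q.2 < 3 * q.1 + 4 * m + 2).card
      = (FM1 m n).card := by
  apply Finset.card_bij' (i := fun q _ => (q.1 / 4, q.2)) (j := fun p _ => (4 * p.1, p.2))
  · rintro ⟨U, V⟩ hq
    simp only [FB, Finset.mem_filter, Finset.mem_product, Finset.mem_Icc] at hq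
    obtain ⟨⟨⟨⟨hU1, hU2⟩, hV1, hV2⟩, h1, h2, h3, h4⟩, hev, hlt⟩ := hq
    have hVodd : ¬ 2 ∣ V := by omega
    obtain ⟨d, hd⟩ := four_dvd_left h4 hev hVodd
    simp only [Prod.mk.injEq]
    exact ⟨by omega, trivial⟩
  · rintro ⟨x, y⟩ _
    simp only [Prod.mk.injEq]
    exact ⟨by omega, trivial⟩
  · rintro ⟨U, V⟩ hq
    simp only [FB, Finset.mem_filter, Finset.mem_product, Finset.mem_Icc] at hq
    obtain ⟨⟨⟨⟨hU1, hU2⟩, hV1, hV2⟩, h1, h2, h3, h4⟩, hev, hlt⟩ := hq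
    have hVodd : ¬ 2 ∣ V := by omega
    obtain ⟨d, hd⟩ := four_dvd_left h4 hev hVodd
    have hdiv : U / 4 = d := by omega
    simp only [FM1, Finset.mem_filter, Finset.mem_product, Finset.mem_Icc, hdiv]
    have e1 : U * V = 2 * (2 * (d * V)) := by rw [hd]; ring
    have hle : d ≤ d * V := Nat.le_mul_of_pos_right _ (by omega)
    have hle2 : V ≤ d * V := Nat.le_mul_of_pos_left _ (by omega)
    exact ⟨⟨⟨by omega, by omega⟩, by omega, by omega⟩, by omega, by omega, by omega, by omega⟩
  · rintro ⟨x, y⟩ hp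
    simp only [FM1, Finset.mem_filter, Finset.mem_product, Finset.mem_Icc] at hp
    obtain ⟨⟨⟨hx1, hx2⟩, hy1, hy2⟩, hodd, h1, h2, h3⟩ := hp
    simp only [FB, Finset.mem_filter, Finset.mem_product, Finset.mem_Icc]
    have e1 : 4 * x * y = 2 * (2 * (x * y)) := by ring
    have hle : x ≤ x * y := Nat.le_mul_of_pos_right _ (by omega)
    have hle2 : y ≤ x * y := Nat.le_mul_of_pos_left _ (by omega)
    exact ⟨⟨⟨⟨by omega, by omega⟩, by omega, by omega⟩, by omega, by omega, by omega,
      ⟨x * y, by omega⟩⟩, by omega, by omega⟩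

lemma card_D2 (m n : ℕ) :
    ((FB m n).filter fun q => ¬ 2 ∣ q.1 ∧ q.2 < 6 * q.1 + 4 * m + 2).card
      = (FM2 m n).card := by
  apply Finset.card_bij' (i := fun q _ => (q.2 / 4, q.1)) (j := fun p _ => (p.2, 4 * p.1))
  · rintro ⟨U, V⟩ hq
    simp only [FB, Finset.mem_filter, Finset.mem_product, Finset.mem_Icc] at hq
    obtain ⟨⟨⟨⟨hU1, hU2⟩, hV1, hV2⟩, h1, h2, h3, h4⟩, hod, hlt⟩ := hq
    have hVev : 2 ∣ V := by omega
    have h4' : 4 ∣ V * U := by rw [mul_comm] at h4; exact h4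
    obtain ⟨d, hd⟩ := four_dvd_left h4' hVev hod
    simp only [Prod.mk.injEq]
    exact ⟨trivial, by omega⟩
  · rintro ⟨x, y⟩ _
    simp only [Prod.mk.injEq]
    exact ⟨by omega, trivial⟩
  · rintro ⟨U, V⟩ hq
    simp only [FB, Finset.mem_filter, Finset.mem_product, Finset.mem_Icc] at hq
    obtain ⟨⟨⟨⟨hU1, hU2⟩, hV1, hV2⟩, h1, h2, h3, h4⟩, hod, hlt⟩ := hq
    have hVev : 2 ∣ V := by omega
    have h4' : 4 ∣ V * U := by rw [mul_comm] at h4; exact h4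
    obtain ⟨d, hd⟩ := four_dvd_left h4' hVev hod
    have hdiv : V / 4 = d := by omega
    simp only [FM2, Finset.mem_filter, Finset.mem_product, Finset.mem_Icc, hdiv]
    have e1 : U * V = 2 * (2 * (d * U)) := by rw [hd]; ring
    have hle : d ≤ d * U := Nat.le_mul_of_pos_right _ (by omega)
    have hle2 : U ≤ d * U := Nat.le_mul_of_pos_left _ (by omega)
    exact ⟨⟨⟨by omega, by omega⟩, by omega, by omega⟩, by omega, by omega, by omega, by omega⟩
  · rintro ⟨x, y⟩ hp
    simp only [FM2, Finset.mem_filter, Finset.mem_product, Finset.mem_Icc] at hp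
    obtain ⟨⟨⟨hx1, hx2⟩, hy1, hy2⟩, hodd, h1, h2, h3⟩ := hp
    simp only [FB, Finset.mem_filter, Finset.mem_product, Finset.mem_Icc]
    have e1 : y * (4 * x) = 2 * (2 * (x * y)) := by ring
    have hle : x ≤ x * y := Nat.le_mul_of_pos_right _ (by omega)
    have hle2 : y ≤ x * y := Nat.le_mul_of_pos_left _ (by omega)
    exact ⟨⟨⟨⟨by omega, by omega⟩, by omega, by omega⟩, by omega, by omega, by omega,
      ⟨x * y, by omega⟩⟩, by omega, by omega⟩

def natPair : ℕ × ℕ → ℤ × ℤ := fun a => ((a.1 : ℤ), (a.2 : ℤ))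

lemma natPair_inj : Function.Injective natPair := by
  rintro ⟨a, b⟩ ⟨c, d⟩ h
  simp only [natPair, Prod.mk.injEq, Nat.cast_inj] at h
  simp [h.1, h.2]

lemma ncard_help1 (m n : ℕ) :
    Set.ncard {p : ℤ × ℤ | ((p.1 : ℝ) * (p.2 : ℝ) < ((n : ℝ) + 1) / 2 ∧
      (p.2 : ℝ) - 6 * (p.1 : ℝ) < 2 * (m : ℝ) ∧ (p.2 : ℝ) - 4 * (p.1 : ℝ) > 2 * (m : ℝ) ∧
      (p.1 : ℝ) > 0 ∧ (p.2 : ℝ) > 0) ∧ Odd p.2} = (FM1 m n).card := by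
  have hset : {p : ℤ × ℤ | ((p.1 : ℝ) * (p.2 : ℝ) < ((n : ℝ) + 1) / 2 ∧
      (p.2 : ℝ) - 6 * (p.1 : ℝ) < 2 * (m : ℝ) ∧ (p.2 : ℝ) - 4 * (p.1 : ℝ) > 2 * (m : ℝ) ∧
      (p.1 : ℝ) > 0 ∧ (p.2 : ℝ) > 0) ∧ Odd p.2} = ↑((FM1 m n).image natPair) := by
    ext ⟨X, Y⟩
    simp only [Set.mem_setOf_eq, Finset.coe_image, Set.mem_image, Finset.mem_coe,
      FM1, Finset.mem_filter, Finset.mem_product, Finset.mem_Icc, natPair, Prod.mk.injEq]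
    constructor
    · rintro ⟨⟨h1, h2, h3, h4, h5⟩, hodd⟩
      have hX : 0 < X := by exact_mod_cast h4
      have hY : 0 < Y := by exact_mod_cast h5
      have hz2 : (Y : ℤ) - 6 * X < 2 * (m : ℤ) := by exact_mod_cast h2
      have hz3 : (Y : ℤ) - 4 * X > 2 * (m : ℤ) := by exact_mod_cast h3
      have hz1 : 2 * (X * Y) < (n : ℤ) + 1 := by
        have hr : (2 : ℝ) * ((X : ℝ) * (Y : ℝ)) < (n : ℝ) + 1 := by linarith
        exact_mod_cast hr
      obtain ⟨c, hc⟩ := hodd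
      have hA : (X.toNat : ℤ) = X := Int.toNat_of_nonneg (by omega)
      have hB : (Y.toNat : ℤ) = Y := Int.toNat_of_nonneg (by omega)
      have hprod : ((X.toNat * Y.toNat : ℕ) : ℤ) = X * Y := by push_cast; rw [hA, hB]
      have hle : X.toNat ≤ X.toNat * Y.toNat := Nat.le_mul_of_pos_right _ (by omega)
      have hle2 : Y.toNat ≤ X.toNat * Y.toNat := Nat.le_mul_of_pos_left _ (by omega)
      refine ⟨(X.toNat, Y.toNat), ⟨⟨⟨by omega, by omega⟩, by omega, by omega⟩,
        by omega, by omega, by omega, by dsimp only; omega⟩, by omega, by omega⟩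
    · rintro ⟨⟨x, y⟩, ⟨⟨⟨hx1, hx2⟩, hy1, hy2⟩, hodd, h1, h2, h3⟩, e1, e2⟩
      subst e1; subst e2
      have hr : ((2 * (x * y) : ℕ) : ℝ) ≤ (n : ℝ) := Nat.cast_le.mpr h3
      push_cast at hr
      have hr1 : ((4 * x + 2 * m : ℕ) : ℝ) < (y : ℝ) := by exact_mod_cast h1
      have hr2 : ((y : ℕ) : ℝ) < ((6 * x + 2 * m : ℕ) : ℝ) := by exact_mod_cast h2
      push_cast at hr1 hr2
      have hx0 : (0 : ℝ) < (x : ℝ) := by exact_mod_cast hx1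
      have hy0 : (0 : ℝ) < (y : ℝ) := by exact_mod_cast hy1
      refine ⟨⟨by push_cast; nlinarith, by push_cast; linarith, by push_cast; linarith,
        by push_cast; linarith, by push_cast; linarith⟩, ?_⟩
      have : Odd y := Nat.odd_iff.mpr (by omega)
      exact_mod_cast this
  rw [hset, Set.ncard_coe_finset, Finset.card_image_of_injective _ natPair_inj]

lemma ncard_help2 (m n : ℕ) :
    Set.ncard {p : ℤ × ℤ | ((p.1 : ℝ) * (p.2 : ℝ) < ((n : ℝ) + 1) / 2 ∧
      2 * (p.1 : ℝ) - 3 * (p.2 : ℝ) < 2 * (m : ℝ) ∧ 4 * (p.1 : ℝ) - (p.2 : ℝ) > 2 * (m : ℝ) ∧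
      (p.1 : ℝ) > 0 ∧ (p.2 : ℝ) > 0) ∧ Odd p.2} = (FM2 m n).card := by
  have hset : {p : ℤ × ℤ | ((p.1 : ℝ) * (p.2 : ℝ) < ((n : ℝ) + 1) / 2 ∧
      2 * (p.1 : ℝ) - 3 * (p.2 : ℝ) < 2 * (m : ℝ) ∧ 4 * (p.1 : ℝ) - (p.2 : ℝ) > 2 * (m : ℝ) ∧
      (p.1 : ℝ) > 0 ∧ (p.2 : ℝ) > 0) ∧ Odd p.2} = ↑((FM2 m n).image natPair) := by
    ext ⟨X, Y⟩
    simp only [Set.mem_setOf_eq, Finset.coe_image, Set.mem_image, Finset.mem_coe,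
      FM2, Finset.mem_filter, Finset.mem_product, Finset.mem_Icc, natPair, Prod.mk.injEq]
    constructor
    · rintro ⟨⟨h1, h2, h3, h4, h5⟩, hodd⟩
      have hX : 0 < X := by exact_mod_cast h4
      have hY : 0 < Y := by exact_mod_cast h5
      have hz2 : 2 * (X : ℤ) - 3 * Y < 2 * (m : ℤ) := by exact_mod_cast h2
      have hz3 : 4 * (X : ℤ) - Y > 2 * (m : ℤ) := by exact_mod_cast h3
      have hz1 : 2 * (X * Y) < (n : ℤ) + 1 := by
        have hr : (2 : ℝ) * ((X : ℝ) * (Y : ℝ)) < (n : ℝ) + 1 := by linarith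
        exact_mod_cast hr
      obtain ⟨c, hc⟩ := hodd
      have hA : (X.toNat : ℤ) = X := Int.toNat_of_nonneg (by omega)
      have hB : (Y.toNat : ℤ) = Y := Int.toNat_of_nonneg (by omega)
      have hprod : ((X.toNat * Y.toNat : ℕ) : ℤ) = X * Y := by push_cast; rw [hA, hB]
      have hle : X.toNat ≤ X.toNat * Y.toNat := Nat.le_mul_of_pos_right _ (by omega)
      have hle2 : Y.toNat ≤ X.toNat * Y.toNat := Nat.le_mul_of_pos_left _ (by omega)
      refine ⟨(X.toNat, Y.toNat), ⟨⟨⟨by omega, by omega⟩, by omega, by omega⟩,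
        by omega, by omega, by omega, by dsimp only; omega⟩, by omega, by omega⟩
    · rintro ⟨⟨x, y⟩, ⟨⟨⟨hx1, hx2⟩, hy1, hy2⟩, hodd, h1, h2, h3⟩, e1, e2⟩
      subst e1; subst e2
      have hr : ((2 * (x * y) : ℕ) : ℝ) ≤ (n : ℝ) := Nat.cast_le.mpr h3
      push_cast at hr
      have hr1 : ((2 * x : ℕ) : ℝ) < ((3 * y + 2 * m : ℕ) : ℝ) := by exact_mod_cast h1
      have hr2 : ((y + 2 * m : ℕ) : ℝ) < ((4 * x : ℕ) : ℝ) := by exact_mod_cast h2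
      push_cast at hr1 hr2
      have hx0 : (0 : ℝ) < (x : ℝ) := by exact_mod_cast hx1
      have hy0 : (0 : ℝ) < (y : ℝ) := by exact_mod_cast hy1
      refine ⟨⟨by push_cast; nlinarith, by push_cast; linarith, by push_cast; linarith,
        by push_cast; linarith, by push_cast; linarith⟩, ?_⟩
      have : Odd y := Nat.odd_iff.mpr (by omega)
      exact_mod_cast this
  rw [hset, Set.ncard_coe_finset, Finset.card_image_of_injective _ natPair_inj]

/-- Let `m ≥ 0` and `n ≥ 1` be integers with `n` even. Then
`X^(m)(n) = M₂^(m)(n) - M₁^(m)(n)`, where `M₁^(m)(n)` is the number of lattice points with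
odd `y`-coordinate in `Ω = {(x,y) : xy < (n+1)/2, y-6x < 2m, y-4x > 2m, x > 0, y > 0}` and
`M₂^(m)(n)` is the number of lattice points with odd `y`-coordinate in
`Ω' = {(x,y) : xy < (n+1)/2, 2x-3y < 2m, 4x-y > 2m, x > 0, y > 0}`. -/
theorem stmt11 (m : ℕ) (Xc : ℕ → ℤ)
    (hX : (1 - PowerSeries.X ^ 2) * PowerSeries.mk Xc = seriesA m - seriesB m)
    (n : ℕ) (hn : 1 ≤ n) (hne : Even n)
    (Ω Ω' : Set (ℝ × ℝ))
    (hΩ : Ω = {P : ℝ × ℝ | P.1 * P.2 < ((n : ℝ) + 1) / 2 ∧ P.2 - 6 * P.1 < 2 * (m : ℝ) ∧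
      P.2 - 4 * P.1 > 2 * (m : ℝ) ∧ P.1 > 0 ∧ P.2 > 0})
    (hΩ' : Ω' = {P : ℝ × ℝ | P.1 * P.2 < ((n : ℝ) + 1) / 2 ∧
      2 * P.1 - 3 * P.2 < 2 * (m : ℝ) ∧ 4 * P.1 - P.2 > 2 * (m : ℝ) ∧ P.1 > 0 ∧ P.2 > 0})
    (M1 M2 : ℕ)
    (hM1 : M1 = Set.ncard {p : ℤ × ℤ | ((p.1 : ℝ), (p.2 : ℝ)) ∈ Ω ∧ Odd p.2})
    (hM2 : M2 = Set.ncard {p : ℤ × ℤ | ((p.1 : ℝ), (p.2 : ℝ)) ∈ Ω' ∧ Odd p.2}) :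
    Xc n = (M2 : ℤ) - (M1 : ℤ) := by

  obtain ⟨t, ht⟩ := hne
  have htn : n = 2 * t := by omega
  subst htn
  subst hM1; subst hM2
  have h1 : Xc (2 * t) = (∑ p ∈ FA m (2 * t), (-1 : ℤ) ^ p.1)
      - ∑ p ∈ FB m (2 * t), (-1 : ℤ) ^ p.1 := by
    rw [teleXc m Xc hX t, Finset.sum_sub_distrib]
    congr 1
    · rw [Finset.sum_congr rfl fun i _ => coeffA m (2 * i)]
      exact sumA m t
    · rw [Finset.sum_congr rfl fun i _ => coeffB m (2 * i)]
      exact sumB m t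
  set n := 2 * t with hnt
  have hsub : (FA m n).image phi ⊆ FB m n := Finset.image_subset_iff.mpr (phi_mem m n)
  have himg : ∑ p ∈ (FA m n).image phi, (-1 : ℤ) ^ p.1 = ∑ p ∈ FA m n, (-1 : ℤ) ^ p.1 := by
    rw [Finset.sum_image (phi_inj m n)]
    exact Finset.sum_congr rfl fun p _ => phi_sign p
  have hsdiff := Finset.sum_sdiff (f := fun p : ℕ × ℕ => (-1 : ℤ) ^ p.1) hsub
  set D1 := (FB m n).filter (fun q => 2 ∣ q.1 ∧ 2 * q.2 < 3 * q.1 + 4 * m + 2) with hD1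
  set D2 := (FB m n).filter (fun q => ¬ 2 ∣ q.1 ∧ q.2 < 6 * q.1 + 4 * m + 2) with hD2
  have hDeq : FB m n \ (FA m n).image phi = D1 ∪ D2 := by
    ext q
    simp only [hD1, hD2, Finset.mem_sdiff, Finset.mem_union, Finset.mem_filter]
    constructor
    · rintro ⟨hFB, hni⟩
      rw [image_char m n q hFB] at hni
      by_cases hpar : 2 ∣ q.1
      · exact Or.inl ⟨hFB, hpar, by omega⟩
      · exact Or.inr ⟨hFB, hpar, by omega⟩
    · rintro (⟨hFB, hc1, hc2⟩ | ⟨hFB, hc1, hc2⟩) <;> refine ⟨hFB, ?_⟩ <;>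
        rw [image_char m n q hFB] <;> omega
  have hdisj : Disjoint D1 D2 := by
    rw [Finset.disjoint_left]
    intro q hq1 hq2
    simp only [hD1, hD2, Finset.mem_filter] at hq1 hq2
    exact hq2.2.1 hq1.2.1
  rw [hDeq, Finset.sum_union hdisj] at hsdiff
  have hs1 : ∑ q ∈ D1, (-1 : ℤ) ^ q.1 = (D1.card : ℤ) := by
    have hone : ∀ q ∈ D1, (-1 : ℤ) ^ q.1 = 1 := by
      intro q hq
      simp only [hD1, Finset.mem_filter] at hq
      obtain ⟨c, hc⟩ := hq.2.1
      exact Even.neg_one_pow ⟨c, by omega⟩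
    rw [Finset.sum_congr rfl hone]; simp
  have hs2 : ∑ q ∈ D2, (-1 : ℤ) ^ q.1 = -(D2.card : ℤ) := by
    have hone : ∀ q ∈ D2, (-1 : ℤ) ^ q.1 = -1 := by
      intro q hq
      simp only [hD2, Finset.mem_filter] at hq
      exact Odd.neg_one_pow (Nat.odd_iff.mpr (by omega))
    rw [Finset.sum_congr rfl hone]; simp
  have hcd1 := congrArg (fun k : ℕ => (k : ℤ)) (card_D1 m n)
  have hcd2 := congrArg (fun k : ℕ => (k : ℤ)) (card_D2 m n)
  have key : Xc n = ((FM2 m n).card : ℤ) - ((FM1 m n).card : ℤ) := by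
    rw [h1]
    rw [← hD1] at hcd1
    rw [← hD2] at hcd2
    linarith [hsdiff, himg, hs1, hs2, hcd1, hcd2]
  have e1 : Set.ncard {p : ℤ × ℤ | ((p.1 : ℝ), (p.2 : ℝ)) ∈ Ω ∧ Odd p.2}
      = (FM1 m n).card := by
    rw [hΩ]; exact ncard_help1 m n
  have e2 : Set.ncard {p : ℤ × ℤ | ((p.1 : ℝ), (p.2 : ℝ)) ∈ Ω' ∧ Odd p.2}
      = (FM2 m n).card := by
    rw [hΩ']; exact ncard_help2 m n
  rw [e1, e2]
  exact key
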